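/- Suppose $f, f', f'' : \mathbb{R} \to \mathbb{R}$ exist, are bounded and uniformly continuous on $\mathbb{R}$, and $f$ is integrable. For $k \in \mathbb{N}$, $k \ge 1$, the function $u_k(x,t) = P_{kt}(f)(x) = \frac{1}{2kt} \int_{-\infty}^{+\infty} f(x-u)\, e^{-|u|/(kt)}\, du$ solves the initial value problem $\frac{\partial u_k}{\partial t}(x,t) = k^2 t^2 \frac{\partial^3 u_k}{\partial x^2 \partial t}(x,t) + 2 k^2 t\, \frac{\partial^2 u_k}{\partial x^2}(x,t)$ for all $t>0$, $x \in \mathbb{R}$, together with $\lim_{s \searrow 0} u_k(x,s) = f(x)$ for every $x \in \mathbb{R}$. -/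

import Mathlib

open MeasureTheory Filter Real Set Metric

/-- The Picard convolution operator. -/
noncomputable def picardConv (f : ℝ → ℝ) (s x : ℝ) : ℝ :=
  (1 / (2 * s)) * ∫ v : ℝ, f (x - v) * Real.exp (-|v| / s)

namespace PicardAux

lemma integrableOn_Ioi_exp_neg_mul_abs {b : ℝ} (hb : 0 < b) :
    IntegrableOn (fun v : ℝ => Real.exp (-(b * |v|))) (Ioi 0) := by
  refine (exp_neg_integrableOn_Ioi 0 hb).congr_fun (fun x hx => ?_) measurableSet_Ioi
  show rexp (-b * x) = _
  rw [abs_of_pos hx, neg_mul]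

lemma integrable_exp_neg_mul_abs {b : ℝ} (hb : 0 < b) :
    Integrable (fun v : ℝ => Real.exp (-(b * |v|))) := by
  have h1 := integrableOn_Ioi_exp_neg_mul_abs hb
  have h2 : IntegrableOn (fun v : ℝ => Real.exp (-(b * |v|))) (Iic 0) := by
    rw [← Measure.map_neg_eq_self (volume : Measure ℝ)]
    have m : MeasurableEmbedding fun x : ℝ => -x := (Homeomorph.neg ℝ).measurableEmbedding
    rw [m.integrableOn_map_iff]
    simp_rw [Function.comp_def, abs_neg, Set.neg_preimage, Set.neg_Iic, neg_zero]
    exact (integrableOn_Ici_iff_integrableOn_Ioi (by finiteness)).mpr h1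
  have h3 := h2.union h1
  rwa [Set.Iic_union_Ioi, integrableOn_univ] at h3

lemma integrable_exp_kernel {s : ℝ} (hs : 0 < s) :
    Integrable (fun v : ℝ => Real.exp (-|v| / s)) := by
  have e : (fun v : ℝ => Real.exp (-(s⁻¹ * |v|))) = fun v : ℝ => Real.exp (-|v| / s) := by
    funext v; rw [neg_div, div_eq_inv_mul]
  rw [← e]; exact integrable_exp_neg_mul_abs (inv_pos.mpr hs)

lemma cont_kernel (s : ℝ) : Continuous fun v : ℝ => Real.exp (-|v| / s) := by
  have h : Continuous fun v : ℝ => -|v| / s := (continuous_abs.neg).div_const s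
  exact Real.continuous_exp.comp h

lemma mul_exp_neg_le_one {r : ℝ} (hr : 0 ≤ r) : r * Real.exp (-r) ≤ 1 := by
  have h1 : Real.exp (-r) * Real.exp r = 1 := by rw [← Real.exp_add]; simp
  nlinarith [Real.add_one_le_exp r, Real.exp_pos (-r)]

lemma integrable_abs_mul_exp : Integrable (fun v : ℝ => |v| * Real.exp (-|v|)) := by
  refine ((integrable_exp_neg_mul_abs (b := 2⁻¹) (by norm_num)).const_mul 2).mono'
    ((continuous_abs.mul (Real.continuous_exp.comp continuous_abs.neg)).aestronglyMeasurable)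
    (ae_of_all _ fun v => ?_)
  rw [Real.norm_eq_abs, abs_of_nonneg (by positivity)]
  have h1 : Real.exp (-|v|) = Real.exp (-(2⁻¹ * |v|)) * Real.exp (-(2⁻¹ * |v|)) := by
    rw [← Real.exp_add]; ring_nf
  have h2 : (2⁻¹ * |v|) * Real.exp (-(2⁻¹ * |v|)) ≤ 1 := mul_exp_neg_le_one (by positivity)
  have h3 := Real.exp_pos (-(2⁻¹ * |v|))
  nlinarith

lemma integrable_bdd_mul_exp {h : ℝ → ℝ} {M : ℝ} (hc : Continuous h) (hM : ∀ w, |h w| ≤ M) :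
    Integrable (fun w : ℝ => h w * Real.exp (-|w|)) := by
  refine ((integrable_exp_neg_mul_abs (b := 1) one_pos).const_mul M).mono'
    ((hc.mul (Real.continuous_exp.comp continuous_abs.neg)).aestronglyMeasurable)
    (ae_of_all _ fun v => ?_)
  rw [Real.norm_eq_abs, abs_mul, abs_of_pos (Real.exp_pos _), one_mul]
  exact mul_le_mul_of_nonneg_right (hM v) (Real.exp_pos _).le

lemma integrable_shift_kernel {g : ℝ → ℝ} {M : ℝ} (hg : Continuous g)
    (hgM : ∀ y, |g y| ≤ M) {s : ℝ} (hs : 0 < s) (x : ℝ) :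
    Integrable (fun v : ℝ => g (x - v) * Real.exp (-|v| / s)) := by
  refine ((integrable_exp_kernel hs).const_mul M).mono'
    ((hg.comp (continuous_const.sub continuous_id)).mul (cont_kernel s)).aestronglyMeasurable
    (ae_of_all _ fun v => ?_)
  rw [Real.norm_eq_abs, abs_mul, abs_of_pos (Real.exp_pos _)]
  exact mul_le_mul_of_nonneg_right (hgM _) (Real.exp_pos _).le

lemma integrableOn_Ioi_bdd_mul_exp {h : ℝ → ℝ} {M : ℝ} (hc : Continuous h)
    (hM : ∀ w, |h w| ≤ M) {s : ℝ} (hs : 0 < s) :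
    IntegrableOn (fun v : ℝ => h v * Real.exp (-v / s)) (Ioi 0) := by
  have hker : IntegrableOn (fun v : ℝ => Real.exp (-v / s)) (Ioi 0) := by
    refine (exp_neg_integrableOn_Ioi 0 (inv_pos.mpr hs)).congr_fun (fun v _ => ?_)
      measurableSet_Ioi
    show rexp (-s⁻¹ * v) = _
    rw [neg_div, div_eq_inv_mul, neg_mul]
  refine (hker.const_mul M).mono'
    ((hc.mul (Real.continuous_exp.comp (continuous_id.neg.div_const s))).aestronglyMeasurable.restrict)
    (ae_of_all _ fun v => ?_)
  rw [Real.norm_eq_abs, abs_mul, abs_of_pos (Real.exp_pos _)]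
  exact mul_le_mul_of_nonneg_right (hM _) (Real.exp_pos _).le

end PicardAux

namespace PicardAux

lemma hasDerivAt_conv {g : ℝ → ℝ} {M M' : ℝ}
    (hgd : Differentiable ℝ g) (hgM : ∀ y, |g y| ≤ M)
    (hg'c : Continuous (deriv g)) (hg'M : ∀ y, |deriv g y| ≤ M')
    {s : ℝ} (hs : 0 < s) (x : ℝ) :
    HasDerivAt (fun y => ∫ v : ℝ, g (y - v) * Real.exp (-|v| / s))
      (∫ v : ℝ, deriv g (x - v) * Real.exp (-|v| / s)) x := by
  have key := hasDerivAt_integral_of_dominated_loc_of_deriv_le (μ := volume) (𝕜 := ℝ)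
    (F := fun y v => g (y - v) * Real.exp (-|v| / s))
    (F' := fun y v => deriv g (y - v) * Real.exp (-|v| / s))
    (x₀ := x) (bound := fun v => M' * Real.exp (-|v| / s)) (Metric.ball_mem_nhds _ one_pos)
    (Eventually.of_forall fun y =>
      ((hgd.continuous.comp (continuous_const.sub continuous_id)).mul
        (cont_kernel s)).aestronglyMeasurable)
    (integrable_shift_kernel hgd.continuous hgM hs x)
    (((hg'c.comp (continuous_const.sub continuous_id)).mul
        (cont_kernel s)).aestronglyMeasurable)
    (ae_of_all _ fun v y _ => by
      rw [Real.norm_eq_abs, abs_mul, abs_of_pos (Real.exp_pos _)]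
      exact mul_le_mul_of_nonneg_right (hg'M _) (Real.exp_pos _).le)
    ((integrable_exp_kernel hs).const_mul M')
    (ae_of_all _ fun v y _ => by
      have h1 : HasDerivAt (fun z : ℝ => g (z - v)) (deriv g (y - v)) y := by
        simpa [Function.comp_def] using ((hgd (y - v)).hasDerivAt.comp y ((hasDerivAt_id y).sub_const v))
      exact h1.mul_const _)
  exact key.2

lemma ibp_halfline {g : ℝ → ℝ} {M M' : ℝ}
    (hgd : Differentiable ℝ g) (hgM : ∀ y, |g y| ≤ M)
    (hg'c : Continuous (deriv g)) (hg'M : ∀ y, |deriv g y| ≤ M')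
    {s : ℝ} (hs : 0 < s) (x σ : ℝ) (hσ : σ = 1 ∨ σ = -1) :
    ∫ v in Ioi (0:ℝ), deriv g (x + σ * v) * Real.exp (-v / s)
      = σ * s⁻¹ * (∫ v in Ioi (0:ℝ), g (x + σ * v) * Real.exp (-v / s)) - σ * g x := by
  set F : ℝ → ℝ := fun v => g (x + σ * v) * Real.exp (-v / s) with hF
  have hG1 : IntegrableOn (fun v : ℝ => deriv g (x + σ * v) * Real.exp (-v / s)) (Ioi 0) :=
    integrableOn_Ioi_bdd_mul_exp (hg'c.comp (by fun_prop)) (fun v => hg'M _) hs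
  have hG2 : IntegrableOn (fun v : ℝ => g (x + σ * v) * Real.exp (-v / s)) (Ioi 0) :=
    integrableOn_Ioi_bdd_mul_exp (hgd.continuous.comp (by fun_prop)) (fun v => hgM _) hs
  have hderiv : ∀ v : ℝ, HasDerivAt F
      (σ * (deriv g (x + σ * v) * Real.exp (-v / s))
        + (-s⁻¹) * (g (x + σ * v) * Real.exp (-v / s))) v := by
    intro v
    have h1 : HasDerivAt (fun v : ℝ => -v / s) (-1 / s) v := by
      simpa using ((hasDerivAt_id v).neg.div_const s)
    have h2 : HasDerivAt (fun v : ℝ => g (x + σ * v)) (deriv g (x + σ * v) * σ) v := by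
      have hin : HasDerivAt (fun v : ℝ => x + σ * v) σ v := by
        simpa using ((hasDerivAt_id v).const_mul σ).const_add x
      exact (hgd _).hasDerivAt.comp v hin
    have : HasDerivAt F (deriv g (x + σ * v) * σ * Real.exp (-v / s)
        + g (x + σ * v) * (Real.exp (-v / s) * (-1 / s))) v := h2.mul h1.exp
    convert this using 1
    ring
  have htend : Tendsto F atTop (nhds 0) := by
    have hb : Tendsto (fun v : ℝ => M * Real.exp (-v / s)) atTop (nhds 0) := by
      have h1 : Tendsto (fun v : ℝ => -v / s) atTop atBot := by
        apply Tendsto.atBot_div_const hs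
        exact tendsto_neg_atTop_atBot
      have := (Real.tendsto_exp_atBot.comp h1).const_mul M
      simpa using this
    refine squeeze_zero_norm (fun v => ?_) hb
    rw [Real.norm_eq_abs, abs_mul, abs_of_pos (Real.exp_pos _)]
    exact mul_le_mul_of_nonneg_right (hgM _) (Real.exp_pos _).le
  have hcont : ContinuousWithinAt F (Ici 0) 0 := by
    apply Continuous.continuousWithinAt
    exact (hgd.continuous.comp (by fun_prop)).mul
      (Real.continuous_exp.comp (continuous_id.neg.div_const s))
  have hFint : IntegrableOn (fun v : ℝ =>
      σ * (deriv g (x + σ * v) * Real.exp (-v / s))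
        + (-s⁻¹) * (g (x + σ * v) * Real.exp (-v / s))) (Ioi 0) :=
    (hG1.const_mul σ).add (hG2.const_mul _)
  have key := integral_Ioi_of_hasDerivAt_of_tendsto hcont (fun v _ => hderiv v) hFint htend
  have hF0 : F 0 = g x := by simp [hF]
  rw [hF0] at key
  rw [integral_add (hG1.const_mul σ) (hG2.const_mul _), integral_const_mul,
    integral_const_mul] at key
  have hσ2 : σ * σ = 1 := by rcases hσ with h | h <;> rw [h] <;> norm_num
  rcases hσ with h | h <;> subst h <;> [linarith [key]; linarith [key]]

lemma integral_kernel_split {g : ℝ → ℝ} {M : ℝ} (hgc : Continuous g)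
    (hgM : ∀ y, |g y| ≤ M) {s : ℝ} (hs : 0 < s) (x : ℝ) :
    ∫ v : ℝ, g (x - v) * Real.exp (-|v| / s)
      = (∫ v in Ioi (0:ℝ), g (x + 1 * v) * Real.exp (-v / s))
        + ∫ v in Ioi (0:ℝ), g (x + (-1) * v) * Real.exp (-v / s) := by
  set h : ℝ → ℝ := fun v => g (x - v) * Real.exp (-|v| / s) with hh
  have hint : Integrable h := integrable_shift_kernel hgc hgM hs x
  have hsplit : ∫ v : ℝ, h v = (∫ v in Iic (0:ℝ), h v) + ∫ v in Ioi (0:ℝ), h v := by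
    rw [← integral_add_compl measurableSet_Iic hint, compl_Iic]
  have hneg : ∫ v in Iic (0:ℝ), h v = ∫ v in Ioi (0:ℝ), h (-v) := by
    have := integral_comp_neg_Iic (0:ℝ) (fun v => h (-v))
    simp only [neg_neg, neg_zero] at this
    rw [this]
  have e1 : ∫ v in Ioi (0:ℝ), h (-v) = ∫ v in Ioi (0:ℝ), g (x + 1 * v) * Real.exp (-v / s) := by
    refine setIntegral_congr_fun measurableSet_Ioi (fun v hv => ?_)
    simp only [hh, abs_neg, sub_neg_eq_add, abs_of_pos (show (0:ℝ) < v from hv)]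
    ring_nf
  have e2 : ∫ v in Ioi (0:ℝ), h v = ∫ v in Ioi (0:ℝ), g (x + (-1) * v) * Real.exp (-v / s) := by
    refine setIntegral_congr_fun measurableSet_Ioi (fun v hv => ?_)
    simp only [hh, abs_of_pos (show (0:ℝ) < v from hv)]
    ring_nf
  rw [hsplit, hneg, e1, e2]

end PicardAux

namespace PicardAux

lemma picardConv_eq_subst (f : ℝ → ℝ) {s : ℝ} (hs : 0 < s) (x : ℝ) :
    picardConv f s x = (1/2 : ℝ) * ∫ w : ℝ, f (x - s * w) * Real.exp (-|w|) := by
  have h := MeasureTheory.Measure.integral_comp_mul_left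
    (fun v : ℝ => f (x - v) * Real.exp (-|v| / s)) s
  have h2 : (fun w : ℝ => f (x - s * w) * Real.exp (-|s * w| / s))
      = fun w : ℝ => f (x - s * w) * Real.exp (-|w|) := by
    funext w
    have h3 : -(s * |w|) / s = -|w| := by rw [neg_div, mul_comm, mul_div_assoc, div_self hs.ne', mul_one]
    rw [abs_mul, abs_of_pos hs, h3]
  rw [h2] at h
  show (1 / (2 * s)) * (∫ v : ℝ, f (x - v) * Real.exp (-|v| / s)) = _
  rw [h, smul_eq_mul, abs_of_pos (inv_pos.mpr hs)]
  field_simp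

lemma second_deriv_eq {f : ℝ → ℝ} {M₀ M₁ M₂ : ℝ}
    (hf0d : Differentiable ℝ f) (hM₀ : ∀ y, |f y| ≤ M₀)
    (hf1d : Differentiable ℝ (deriv f)) (hM₁ : ∀ y, |deriv f y| ≤ M₁)
    (hf2c : Continuous (deriv (deriv f))) (hM₂ : ∀ y, |deriv (deriv f) y| ≤ M₂)
    {s : ℝ} (hs : 0 < s) (x : ℝ) :
    iteratedDeriv 2 (fun y => picardConv f s y) x = (picardConv f s x - f x) / s ^ 2 := by
  have hf1c : Continuous (deriv f) := hf1d.continuous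
  have hd1 : ∀ y : ℝ, HasDerivAt (fun z => picardConv f s z)
      ((1/(2*s)) * ∫ v : ℝ, deriv f (y - v) * Real.exp (-|v| / s)) y := by
    intro y
    unfold picardConv
    exact HasDerivAt.const_mul _ (hasDerivAt_conv hf0d hM₀ hf1c hM₁ hs y)
  have e1 : deriv (fun y => picardConv f s y)
      = fun y => (1/(2*s)) * ∫ v : ℝ, deriv f (y - v) * Real.exp (-|v| / s) :=
    funext fun y => (hd1 y).deriv
  have hd2 : HasDerivAt (fun y => (1/(2*s)) * ∫ v : ℝ, deriv f (y - v) * Real.exp (-|v| / s))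
      ((1/(2*s)) * ∫ v : ℝ, deriv (deriv f) (x - v) * Real.exp (-|v| / s)) x :=
    HasDerivAt.const_mul _ (hasDerivAt_conv hf1d hM₁ hf2c hM₂ hs x)
  have e2 : iteratedDeriv 2 (fun y => picardConv f s y) x
      = deriv (deriv (fun y => picardConv f s y)) x := by
    rw [show (2:ℕ) = 1 + 1 from rfl, iteratedDeriv_succ, iteratedDeriv_one]
  rw [e2, e1, hd2.deriv]
  have hL1 := ibp_halfline hf0d hM₀ hf1c hM₁ hs x (-1) (Or.inr rfl)
  have hR1 := ibp_halfline hf0d hM₀ hf1c hM₁ hs x 1 (Or.inl rfl)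
  have hL2 := ibp_halfline hf1d hM₁ hf2c hM₂ hs x (-1) (Or.inr rfl)
  have hR2 := ibp_halfline hf1d hM₁ hf2c hM₂ hs x 1 (Or.inl rfl)
  have hS2 := integral_kernel_split hf2c hM₂ hs x
  have hS0 := integral_kernel_split hf0d.continuous hM₀ hs x
  show _ = ((1 / (2 * s)) * (∫ v : ℝ, f (x - v) * Real.exp (-|v| / s)) - f x) / s ^ 2
  rw [hS2, hR2, hL2, hR1, hL1, hS0]
  field_simp
  ring

lemma hasDerivAt_subst {f : ℝ → ℝ} {M₀ M₁ : ℝ} (hf0d : Differentiable ℝ f)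
    (hM₀ : ∀ y, |f y| ≤ M₀) (hf1c : Continuous (deriv f)) (hM₁ : ∀ y, |deriv f y| ≤ M₁)
    (x : ℝ) (t : ℝ) :
    HasDerivAt (fun s : ℝ => (1/2 : ℝ) * ∫ w : ℝ, f (x - s * w) * Real.exp (-|w|))
      ((1/2 : ℝ) * ∫ w : ℝ, (deriv f (x - t * w) * -(1 * w)) * Real.exp (-|w|)) t := by
  refine HasDerivAt.const_mul _ ?_
  have hc0 : ∀ s : ℝ, Continuous fun w : ℝ => f (x - s * w) * Real.exp (-|w|) := fun s =>
    (hf0d.continuous.comp (continuous_const.sub (continuous_const.mul continuous_id))).mul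
      (Real.continuous_exp.comp continuous_abs.neg)
  have hc1 : Continuous fun w : ℝ => (deriv f (x - t * w) * -(1 * w)) * Real.exp (-|w|) :=
    ((hf1c.comp (continuous_const.sub (continuous_const.mul continuous_id))).mul
      ((continuous_const.mul continuous_id).neg)).mul
      (Real.continuous_exp.comp continuous_abs.neg)
  have key := hasDerivAt_integral_of_dominated_loc_of_deriv_le (μ := volume) (𝕜 := ℝ)
    (F := fun s w => f (x - s * w) * Real.exp (-|w|))
    (F' := fun s w => (deriv f (x - s * w) * -(1 * w)) * Real.exp (-|w|))
    (x₀ := t) (bound := fun w => M₁ * (|w| * Real.exp (-|w|))) (Metric.ball_mem_nhds _ one_pos)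
    (Eventually.of_forall fun s => (hc0 s).aestronglyMeasurable)
    (integrable_bdd_mul_exp
      (hf0d.continuous.comp (continuous_const.sub (continuous_const.mul continuous_id)))
      (fun w => hM₀ _))
    hc1.aestronglyMeasurable
    (ae_of_all _ fun w s _ => by
      rw [Real.norm_eq_abs, abs_mul, abs_mul, abs_of_pos (Real.exp_pos _), abs_neg, one_mul,
        mul_assoc]
      exact mul_le_mul_of_nonneg_right (hM₁ _) (by positivity))
    (integrable_abs_mul_exp.const_mul M₁)
    (ae_of_all _ fun w s _ => by
      have hin : HasDerivAt (fun s : ℝ => x - s * w) (-(1 * w)) s :=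
        ((hasDerivAt_id s).mul_const w).const_sub x
      exact ((hf0d _).hasDerivAt.comp s hin).mul_const _)
  exact key.2

lemma tendsto_initial {f : ℝ → ℝ} {M₀ : ℝ} (hf0c : Continuous f) (hM₀ : ∀ y, |f y| ≤ M₀)
    {k : ℝ} (hk : 0 < k) (x : ℝ) :
    Tendsto (fun s : ℝ => picardConv f (k * s) x) (nhdsWithin 0 (Set.Ioi 0)) (nhds (f x)) := by
  have heq : (fun s : ℝ => (1/2 : ℝ) * ∫ w : ℝ, f (x - (k * s) * w) * Real.exp (-|w|))
      =ᶠ[nhdsWithin (0:ℝ) (Set.Ioi 0)] fun s : ℝ => picardConv f (k * s) x := by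
    filter_upwards [self_mem_nhdsWithin] with s hs
    exact (picardConv_eq_subst f (by exact mul_pos hk hs) x).symm
  have key : Tendsto (fun s : ℝ => ∫ w : ℝ, f (x - (k * s) * w) * Real.exp (-|w|))
      (nhdsWithin 0 (Set.Ioi 0)) (nhds (∫ w : ℝ, f x * Real.exp (-|w|))) := by
    apply tendsto_integral_filter_of_dominated_convergence
      (bound := fun w => M₀ * Real.exp (-|w|))
    · exact Eventually.of_forall fun s =>
        ((hf0c.comp (continuous_const.sub (continuous_const.mul continuous_id))).mul
          (Real.continuous_exp.comp continuous_abs.neg)).aestronglyMeasurable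
    · refine Eventually.of_forall fun s => ae_of_all _ fun w => ?_
      rw [Real.norm_eq_abs, abs_mul, abs_of_pos (Real.exp_pos _)]
      exact mul_le_mul_of_nonneg_right (hM₀ _) (Real.exp_pos _).le
    · exact integrable_bdd_mul_exp continuous_const (fun w => le_refl |M₀|)
    · refine ae_of_all _ fun w => ?_
      have h1 : Tendsto (fun s : ℝ => x - (k * s) * w) (nhdsWithin 0 (Set.Ioi 0)) (nhds x) := by
        have hc : Continuous fun s : ℝ => x - (k * s) * w :=
          continuous_const.sub ((continuous_const.mul continuous_id).mul continuous_const)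
        have h2 := hc.tendsto 0
        simp only [mul_zero, zero_mul, sub_zero] at h2
        exact h2.mono_left nhdsWithin_le_nhds
      exact ((hf0c.tendsto x).comp h1).mul_const _
  have h2 : ∫ w : ℝ, f x * Real.exp (-|w|) = f x * 2 := by
    rw [integral_const_mul]
    congr 1
    have h3 := integral_comp_abs (f := fun r : ℝ => Real.exp (-r))
    rw [h3, integral_exp_neg_Ioi_zero, mul_one]
  have h3 := key.const_mul (1/2 : ℝ)
  rw [h2] at h3
  have h4 : (1/2 : ℝ) * (f x * 2) = f x := by ring
  rw [h4] at h3
  exact h3.congr' heq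

end PicardAux

theorem jackson_picard_component_ivp
    (f : ℝ → ℝ)
    (hf_diff : ∀ i < 2, Differentiable ℝ (iteratedDeriv i f))
    (hf_bdd : ∀ i ≤ 2, ∃ M : ℝ, ∀ x : ℝ, |iteratedDeriv i f x| ≤ M)
    (hf_uc : ∀ i ≤ 2, UniformContinuous (iteratedDeriv i f))
    (hf_int : Integrable f)
    (k : ℕ) (hk : 1 ≤ k) :
    (∀ t > (0 : ℝ), ∀ x : ℝ,
        deriv (fun s => picardConv f (k * s) x) t =
          (k : ℝ) ^ 2 * t ^ 2 *
              deriv (fun s => iteratedDeriv 2 (fun y => picardConv f (k * s) y) x) t +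
            2 * (k : ℝ) ^ 2 * t * iteratedDeriv 2 (fun y => picardConv f (k * t) y) x) ∧
      (∀ x : ℝ, Tendsto (fun s : ℝ => picardConv f (k * s) x)
        (nhdsWithin 0 (Set.Ioi 0)) (nhds (f x))) := by
  have h2eq : iteratedDeriv 2 f = deriv (deriv f) := by
    rw [show (2:ℕ) = 1 + 1 from rfl, iteratedDeriv_succ, iteratedDeriv_one]
  have hf0d : Differentiable ℝ f := by
    have := hf_diff 0 (by norm_num); rwa [iteratedDeriv_zero] at this
  have hf1d : Differentiable ℝ (deriv f) := by
    have := hf_diff 1 (by norm_num); rwa [iteratedDeriv_one] at this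
  have hf1c : Continuous (deriv f) := hf1d.continuous
  have hf2c : Continuous (deriv (deriv f)) := by
    have := (hf_uc 2 le_rfl).continuous; rwa [h2eq] at this
  obtain ⟨M₀, hM₀⟩ := hf_bdd 0 (by norm_num)
  simp only [iteratedDeriv_zero] at hM₀
  obtain ⟨M₁, hM₁⟩ := hf_bdd 1 (by norm_num)
  simp only [iteratedDeriv_one] at hM₁
  obtain ⟨M₂, hM₂⟩ := hf_bdd 2 le_rfl
  simp only [h2eq] at hM₂
  have hkpos : (0:ℝ) < k := by
    have : 0 < k := hk
    exact_mod_cast this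
  constructor
  · intro t ht x
    obtain ⟨D, hu⟩ : ∃ D, HasDerivAt (fun s : ℝ => picardConv f ((k:ℝ) * s) x) D t := by
      have hW := PicardAux.hasDerivAt_subst hf0d hM₀ hf1c hM₁ x ((k:ℝ) * t)
      have hin : HasDerivAt (fun s : ℝ => (k:ℝ) * s) ((k:ℝ) * 1) t :=
        (hasDerivAt_id t).const_mul _
      have hcomp := hW.comp t hin
      refine ⟨_, hcomp.congr_of_eventuallyEq ?_⟩
      filter_upwards [Ioi_mem_nhds ht] with s hs
      exact PicardAux.picardConv_eq_subst f (mul_pos hkpos hs) x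
    have heq2 : (fun s : ℝ => iteratedDeriv 2 (fun y => picardConv f ((k:ℝ) * s) y) x)
        =ᶠ[nhds t] fun s : ℝ => (picardConv f ((k:ℝ) * s) x - f x) / ((k:ℝ)^2 * s^2) := by
      filter_upwards [Ioi_mem_nhds ht] with s hs
      rw [PicardAux.second_deriv_eq hf0d hM₀ hf1d hM₁ hf2c hM₂ (mul_pos hkpos hs) x, mul_pow]
    have hkt := PicardAux.second_deriv_eq hf0d hM₀ hf1d hM₁ hf2c hM₂ (mul_pos hkpos ht) x
    have hden := (hasDerivAt_pow 2 t).const_mul ((k:ℝ)^2)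
    have hq : HasDerivAt (fun s : ℝ => (picardConv f ((k:ℝ) * s) x - f x) / ((k:ℝ)^2 * s^2)) _ t :=
      (hu.sub_const (f x)).div hden (by positivity)
    rw [hu.deriv, heq2.deriv_eq, hq.deriv, hkt]
    have ht' : t ≠ 0 := ht.ne'
    have hk0 : (k:ℝ) ≠ 0 := hkpos.ne'
    push_cast
    field_simp
    ring
  · exact fun x => PicardAux.tendsto_initial hf0d.continuous hM₀ hkpos x
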